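/- For all n ≥ 1, p(n+1) - p(n) = 2 if and only if n lies in the range of p (i.e., n = p(k) for some k ≥ 1). -/
import Mathlib


/-- Wythoff sequences: `p 1 = 1`, `q n = p n + n` for `n ≥ 1`, and `p (n+1)` is the
smallest positive integer not contained in `U_n = {p 1, …, p n, q 1, …, q n}`. -/

theorem stmt_7 (p q : ℕ → ℕ)
    (hp1 : p 1 = 1)
    (hq : ∀ n, 1 ≤ n → q n = p n + n)
    (hmin : ∀ n, 1 ≤ n →
      IsLeast {m : ℕ | 0 < m ∧ ∀ i, 1 ≤ i → i ≤ n → m ≠ p i ∧ m ≠ q i} (p (n + 1))) :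
    ∀ n, 1 ≤ n → (p (n + 1) = p n + 2 ↔ ∃ k, 1 ≤ k ∧ p k = n) := by
  classical
  have ppos : ∀ n, 1 ≤ n → 0 < p n := by
    intro n hn
    rcases Nat.lt_or_ge n 2 with h | h
    · have hn1 : n = 1 := by omega
      rw [hn1, hp1]; norm_num
    · obtain ⟨k, rfl⟩ : ∃ k, n = k + 2 := ⟨n - 2, by omega⟩
      exact (hmin (k + 1) (by omega)).1.1
  have pstep : ∀ n, 1 ≤ n → p n < p (n + 1) := by
    intro n hn
    have hmem := (hmin n hn).1
    have hne : p (n + 1) ≠ p n := (hmem.2 n hn le_rfl).1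
    have hle : p n ≤ p (n + 1) := by
      rcases Nat.lt_or_ge n 2 with h | h
      · have hn1 : n = 1 := by omega
        subst hn1
        rw [hp1]; exact hmem.1
      · obtain ⟨k, rfl⟩ : ∃ k, n = k + 2 := ⟨n - 2, by omega⟩
        refine (hmin (k + 1) (by omega)).2 ⟨hmem.1, ?_⟩
        intro i h1 h2
        exact hmem.2 i h1 (by omega)
    omega
  have pmono : ∀ a b, 1 ≤ a → a < b → p a < p b := by
    intro a b ha hab
    induction b with
    | zero => omega
    | succ m ih =>
      rcases Nat.lt_or_ge a m with h | h
      · exact (ih h).trans (pstep m (by omega))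
      · have ham : a = m := by omega
        subst ham; exact pstep a ha
  have pmono' : ∀ a b, 1 ≤ a → a ≤ b → p a ≤ p b := by
    intro a b ha hab
    rcases eq_or_lt_of_le hab with rfl | h
    · exact le_rfl
    · exact (pmono a b ha h).le
  have pinj : ∀ x y, 1 ≤ x → 1 ≤ y → p x = p y → x = y := by
    intro x y hx hy hxy
    rcases Nat.lt_trichotomy x y with h | h | h
    · have := pmono x y hx h; omega
    · exact h
    · have := pmono y x hy h; omega
  have pge : ∀ n, 1 ≤ n → n ≤ p n := by
    intro n hn
    induction n with
    | zero => omega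
    | succ m ih =>
      rcases Nat.lt_or_ge m 1 with h | h
      · have hm : m = 0 := by omega
        subst hm; rw [hp1]
      · have h1 := ih h
        have h2 := pstep m h
        omega
  have qmono' : ∀ a b, 1 ≤ a → a ≤ b → q a ≤ q b := by
    intro a b ha hab
    rw [hq a ha, hq b (by omega)]
    have := pmono' a b ha hab
    omega
  have qstep : ∀ n, 1 ≤ n → q n + 2 ≤ q (n + 1) := by
    intro n hn
    rw [hq n hn, hq (n + 1) (by omega)]
    have := pstep n hn
    omega
  have gap2 : ∀ n, 1 ≤ n → p (n + 1) ≤ p n + 2 := by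
    intro n hn
    by_contra hcon
    push_neg at hcon
    have h1 : ∃ i, 1 ≤ i ∧ i ≤ n ∧ q i = p n + 1 := by
      by_contra hno
      push_neg at hno
      have hval : p n + 1 ∈ {m : ℕ | 0 < m ∧ ∀ i, 1 ≤ i → i ≤ n → m ≠ p i ∧ m ≠ q i} := by
        refine ⟨by omega, fun i hi1 hi2 => ⟨?_, ?_⟩⟩
        · have := pmono' i n hi1 hi2; omega
        · exact fun h => hno i hi1 hi2 h.symm
      have := (hmin n hn).2 hval
      omega
    have h2 : ∃ j, 1 ≤ j ∧ j ≤ n ∧ q j = p n + 2 := by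
      by_contra hno
      push_neg at hno
      have hval : p n + 2 ∈ {m : ℕ | 0 < m ∧ ∀ i, 1 ≤ i → i ≤ n → m ≠ p i ∧ m ≠ q i} := by
        refine ⟨by omega, fun i hi1 hi2 => ⟨?_, ?_⟩⟩
        · have := pmono' i n hi1 hi2; omega
        · exact fun h => hno i hi1 hi2 h.symm
      have := (hmin n hn).2 hval
      omega
    obtain ⟨i, hi1, hi2, hqi⟩ := h1
    obtain ⟨j, hj1, hj2, hqj⟩ := h2
    rcases Nat.lt_trichotomy i j with h | h | h
    · have hs := qstep i hi1
      have hm := qmono' (i + 1) j (by omega) (by omega)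
      omega
    · subst h; omega
    · have hs := qstep j hj1
      have hm := qmono' (j + 1) i (by omega) (by omega)
      omega
  have pq_ne : ∀ k i, 1 ≤ k → 1 ≤ i → p k ≠ q i := by
    intro k i hk hi
    rcases le_or_gt k i with h | h
    · have h1 := pmono' k i hk h
      have h2 := hq i hi
      omega
    · obtain ⟨m, rfl⟩ : ∃ m, k = m + 1 := ⟨k - 1, by omega⟩
      exact ((hmin m (by omega)).1.2 i hi (by omega)).2
  have cover : ∀ m, 1 ≤ m → (∃ k, 1 ≤ k ∧ p k = m) ∨ (∃ i, 1 ≤ i ∧ q i = m) := by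
    intro m hm
    by_contra hcon
    push_neg at hcon
    obtain ⟨hcp, hcq⟩ := hcon
    have hval : m ∈ {x : ℕ | 0 < x ∧ ∀ i, 1 ≤ i → i ≤ m → x ≠ p i ∧ x ≠ q i} := by
      refine ⟨hm, fun i hi1 hi2 => ⟨?_, ?_⟩⟩
      · exact fun h => hcp i hi1 h.symm
      · exact fun h => hcq i hi1 h.symm
    have h1 := (hmin m hm).2 hval
    have h2 := pge (m + 1) (by omega)
    omega
  have count : ∀ M a b, 1 ≤ a → p a ≤ M → M < p (a + 1) →
      (∀ i, 1 ≤ i → i ≤ b → q i ≤ M) → M < q (b + 1) → M = a + b := by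
    intro M a b ha hpa hpa' hqb hqb'
    have hset : Finset.Icc 1 M = (Finset.Icc 1 a).image p ∪ (Finset.Icc 1 b).image q := by
      ext m
      simp only [Finset.mem_Icc, Finset.mem_union, Finset.mem_image]
      constructor
      · rintro ⟨h1, h2⟩
        rcases cover m h1 with ⟨k, hk, rfl⟩ | ⟨i, hi, rfl⟩
        · left
          refine ⟨k, ⟨hk, ?_⟩, rfl⟩
          by_contra hka
          have := pmono' (a + 1) k (by omega) (by omega)
          omega
        · right
          refine ⟨i, ⟨hi, ?_⟩, rfl⟩
          by_contra hib
          have := qmono' (b + 1) i (by omega) (by omega)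
          omega
      · rintro (⟨k, ⟨hk1, hk2⟩, rfl⟩ | ⟨i, ⟨hi1, hi2⟩, rfl⟩)
        · exact ⟨ppos k hk1, (pmono' k a hk1 hk2).trans hpa⟩
        · refine ⟨?_, hqb i hi1 hi2⟩
          have h1 := hq i hi1
          have h2 := ppos i hi1
          omega
    have hdisj : Disjoint ((Finset.Icc 1 a).image p) ((Finset.Icc 1 b).image q) := by
      rw [Finset.disjoint_left]
      rintro m hm1 hm2
      simp only [Finset.mem_image, Finset.mem_Icc] at hm1 hm2
      obtain ⟨k, ⟨hk1, _⟩, hk⟩ := hm1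
      obtain ⟨i, ⟨hi1, _⟩, hi⟩ := hm2
      exact pq_ne k i hk1 hi1 (hk.trans hi.symm)
    have hcardp : ((Finset.Icc 1 a).image p).card = a := by
      rw [Finset.card_image_of_injOn, Nat.card_Icc]
      · omega
      · intro x hx y hy hxy
        simp only [Finset.coe_Icc, Set.mem_Icc] at hx hy
        exact pinj x y hx.1 hy.1 hxy
    have hcardq : ((Finset.Icc 1 b).image q).card = b := by
      rw [Finset.card_image_of_injOn, Nat.card_Icc]
      · omega
      · intro x hx y hy hxy
        simp only [Finset.coe_Icc, Set.mem_Icc] at hx hy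
        rcases Nat.lt_trichotomy x y with h | h | h
        · have h1 := qstep x hx.1
          have h2 := qmono' (x + 1) y (by omega) (by omega)
          omega
        · exact h
        · have h1 := qstep y hy.1
          have h2 := qmono' (y + 1) x (by omega) (by omega)
          omega
    have h1 : (Finset.Icc 1 M).card = M := by rw [Nat.card_Icc]; omega
    rw [hset, Finset.card_union_of_disjoint hdisj, hcardp, hcardq] at h1
    omega
  have keyid : ∀ n, 1 ≤ n → p (p n) + 1 = q n ∧ p (p n + 1) = q n + 1 := by
    intro n hn
    have hqn : q n = p n + n := hq n hn
    have hpn1 : 1 ≤ p n := ppos n hn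
    have hP : ∃ k, q n < p (k + 1) := ⟨q n, by have := pge (q n + 1) (by omega); omega⟩
    obtain ⟨a, hfa, hamin⟩ : ∃ a, q n < p (a + 1) ∧ ∀ k < a, ¬(q n < p (k + 1)) :=
      ⟨Nat.find hP, Nat.find_spec hP, fun k hk => Nat.find_min hP hk⟩
    have ha1 : 1 ≤ a := by
      by_contra h
      have ha0 : a = 0 := by omega
      subst ha0
      rw [hp1] at hfa
      omega
    have hpa : p a ≤ q n := by
      have := hamin (a - 1) (by omega)
      have ha : a - 1 + 1 = a := by omega
      rw [ha] at this
      omega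
    have hM := count (q n) a n ha1 hpa hfa (fun i hi1 hi2 => qmono' i n hi1 hi2)
      (by have := qstep n hn; omega)
    have hapn : a = p n := by omega
    rw [hapn] at hpa hfa
    have hne := pq_ne (p n) n hpn1 hn
    have hg := gap2 (p n) hpn1
    omega
  intro n hn
  constructor
  · intro h
    have hnotp : ∀ m, 1 ≤ m → p m ≠ p n + 1 := by
      intro m hm hcon
      rcases le_or_gt m n with hle | hlt
      · have := pmono' m n hm hle; omega
      · have := pmono' (n + 1) m (by omega) hlt; omega
    have hc := cover (p n + 1) (by have := ppos n hn; omega)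
    rcases hc with ⟨k, hk, hpk⟩ | ⟨i, hi, hqi⟩
    · exact absurd hpk (hnotp k hk)
    · have hid := keyid i hi
      have hpi1 : 1 ≤ p i := ppos i hi
      have hpp : p (p i) = p n := by omega
      exact ⟨i, hi, pinj (p i) n hpi1 hn hpp⟩
  · rintro ⟨k, hk, rfl⟩
    have hid := keyid k hk
    omega
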